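/- Fix integers m ≥ 3 and i with 1 ≤ i ≤ m. Let w be a list of signed symbols (j, ε), with j ∈ {1, …, m} \ {i} and ε ∈ {+, −}, in which each of the 2(m−1) signed symbols occurs exactly once. Suppose: (i) for all k, ℓ with i < k < ℓ ≤ m, the sublist of w consisting of the symbols with index k or ℓ equals [(k,−), (ℓ,−), (ℓ,+), (k,+)]; (ii) for all j, ℓ with 1 ≤ j < i < ℓ ≤ m, the sublist of symbols with index j or ℓ equals [(j,+), (ℓ,−), (ℓ,+), (j,−)]; and (iii) for all j, k with 1 ≤ j < k < i, the sublist of symbols with index j or k equals [(j,+), (k,+), (k,−), (j,−)]. Then w equals the concatenation [(1,+), (2,+), …, (i−1,+)] ++ [(i+1,−), (i+2,−), …, (m,−)] ++ [(m,+), (m−1,+), …, (i+1,+)] ++ [(i−1,−), (i−2,−), …, (1,−)]. -/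

import Mathlib

local infixl:50 " <+ " => List.Sublist
local infixl:50 " ~ " => List.Perm

namespace Stmt12Aux

/-- rank of a signed symbol in the target code -/
def rank (m i : ℕ) (x : ℕ × Bool) : ℕ :=
  if x.1 < i then (if x.2 then x.1 - 1 else 2*m - 2 - x.1)
  else (if x.2 then 2*m - 1 - x.1 else x.1 - 2)

lemma rank_pos (m i j : ℕ) : rank m i (j, true) = if j < i then j - 1 else 2*m - 1 - j := by
  simp [rank]

lemma rank_neg (m i j : ℕ) : rank m i (j, false) = if j < i then 2*m - 2 - j else j - 2 := by
  simp [rank]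

lemma count_congr {α : Type*} {b1 b2 : BEq α} (h1 : @LawfulBEq α b1) (h2 : @LawfulBEq α b2)
    (a : α) (l : List α) : @List.count α b1 a l = @List.count α b2 a l := by
  induction l with
  | nil => rfl
  | cons c l ih =>
    rw [@List.count_cons α b1, @List.count_cons α b2, ih]
    by_cases h : c = a
    · subst h
      rw [@beq_self_eq_true α b1 _, @beq_self_eq_true α b2 _]
    · rw [(@beq_eq_false_iff_ne α b1 h1 _ _).mpr h, (@beq_eq_false_iff_ne α b2 h2 _ _).mpr h]

lemma mem_mem_sublist {α : Type*} {L : List α} {a b : α} (ha : a ∈ L) (hb : b ∈ L) :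
    a = b ∨ [a, b] <+ L ∨ [b, a] <+ L := by
  induction L with
  | nil => simp at ha
  | cons c L ih =>
    rcases List.mem_cons.mp ha with rfl | ha'
    · rcases List.mem_cons.mp hb with rfl | hb'
      · exact Or.inl rfl
      · exact Or.inr (Or.inl (List.Sublist.cons₂ a (List.singleton_sublist.mpr hb')))
    · rcases List.mem_cons.mp hb with rfl | hb'
      · exact Or.inr (Or.inr (List.Sublist.cons₂ b (List.singleton_sublist.mpr ha')))
      · rcases ih ha' hb' with h | h | h
        · exact Or.inl h
        · exact Or.inr (Or.inl (h.cons c))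
        · exact Or.inr (Or.inr (h.cons c))

lemma sorted_pick {m i : ℕ} {L : List (ℕ × Bool)}
    (hL : L.Pairwise (fun x y => rank m i x < rank m i y))
    {a b : ℕ × Bool} (ha : a ∈ L) (hb : b ∈ L)
    (hr : rank m i a < rank m i b) : [a, b] <+ L := by
  rcases mem_mem_sublist ha hb with rfl | h | h
  · omega
  · exact h
  · exfalso
    have h2 := hL.sublist h
    rw [List.pairwise_cons] at h2
    have := h2.1 a (by simp)
    omega

lemma step (m i : ℕ) {w L : List (ℕ × Bool)} {P : ℕ × Bool → Bool}
    (hf : w.filter P = L) {a b : ℕ × Bool} (ha : a ∈ L) (hb : b ∈ L)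
    (hL : L.Pairwise (fun x y => rank m i x < rank m i y))
    (hr : rank m i a < rank m i b) : [a, b] <+ w :=
  (sorted_pick hL ha hb hr).trans (hf ▸ w.filter_sublist)

lemma eq_of_perm_sublist {α : Type*} : ∀ (v w : List α), w ~ v → v.Nodup →
    (∀ a b : α, [a, b] <+ v → [a, b] <+ w) → w = v := by
  intro v
  induction v with
  | nil => intro w hp _ _; exact List.perm_nil.mp hp
  | cons t v' ih =>
    intro w hp hnd hsub
    have hwnd : w.Nodup := hp.nodup_iff.mpr hnd
    cases w with
    | nil => exact absurd hp.length_eq (by simp)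
    | cons h w' =>
      have hht : h = t := by
        by_contra hne
        have hhv : h ∈ t :: v' := hp.mem_iff.mp (by simp)
        have hhv' : h ∈ v' := by
          rcases List.mem_cons.mp hhv with rfl | hx
          · exact absurd rfl hne
          · exact hx
        have hsw : [t, h] <+ h :: w' :=
          hsub t h (List.Sublist.cons₂ t (List.singleton_sublist.mpr hhv'))
        rcases List.sublist_cons_iff.mp hsw with hs | ⟨r, hr, hrs⟩
        · have hhmem : h ∈ w' := hs.subset (by simp)
          exact (List.nodup_cons.mp hwnd).1 hhmem
        · have hth : t = h := by injection hr
          exact hne hth.symm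
      subst hht
      have hp' : w' ~ v' := (List.perm_cons h).mp hp
      have hstep : ∀ a b : α, [a, b] <+ v' → [a, b] <+ w' := by
        intro a b hab
        have haw : [a, b] <+ h :: w' := hsub a b (hab.cons h)
        have hav' : a ∈ v' := hab.subset (by simp)
        have hah : a ≠ h := by
          intro he; subst he
          exact (List.nodup_cons.mp hnd).1 hav'
        rcases List.sublist_cons_iff.mp haw with hs | ⟨r, hr, hrs⟩
        · exact hs
        · have hae : a = h := by injection hr
          exact absurd hae hah
      rw [ih w' hp' (List.nodup_cons.mp hnd).2 hstep]

lemma key (m i : ℕ) (hm : 3 ≤ m) (hi1 : 1 ≤ i) (him : i ≤ m)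
    (w : List (ℕ × Bool))
    (h1 : ∀ k l : ℕ, i < k → k < l → l ≤ m →
      w.filter (fun x => decide (x.1 = k ∨ x.1 = l)) =
        [(k, false), (l, false), (l, true), (k, true)])
    (h2 : ∀ j l : ℕ, 1 ≤ j → j < i → i < l → l ≤ m →
      w.filter (fun x => decide (x.1 = j ∨ x.1 = l)) =
        [(j, true), (l, false), (l, true), (j, false)])
    (h3 : ∀ j k : ℕ, 1 ≤ j → j < k → k < i →
      w.filter (fun x => decide (x.1 = j ∨ x.1 = k)) =
        [(j, true), (k, true), (k, false), (j, false)]) :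
    ∀ a b : ℕ × Bool, (1 ≤ a.1 ∧ a.1 ≤ m ∧ a.1 ≠ i) → (1 ≤ b.1 ∧ b.1 ≤ m ∧ b.1 ≠ i) →
      rank m i a < rank m i b → [a, b] <+ w := by
  rintro ⟨j, ε⟩ ⟨k, δ⟩ ⟨hj1, hjm, hji⟩ ⟨hk1, hkm, hki⟩ hr
  rcases Nat.lt_trichotomy j i with hjlt | rfl | hjgt
  · rcases Nat.lt_trichotomy k i with hklt | rfl | hkgt
    · -- both < i
      rcases Nat.lt_trichotomy j k with hjk | rfl | hkj
      · exact step m i (h3 j k hj1 hjk hklt) (by cases ε <;> simp) (by cases δ <;> simp)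
          (by simp [List.pairwise_cons, rank_pos, rank_neg]; first | (split_ifs <;> omega) | omega) hr
      · -- same index, j = k < i
        rcases Nat.lt_or_ge i m with him' | him'
        · exact step m i (h2 j m hj1 hjlt him' le_rfl) (by cases ε <;> simp) (by cases δ <;> simp)
            (by simp [List.pairwise_cons, rank_pos, rank_neg]; first | (split_ifs <;> omega) | omega) hr
        · have hieq : i = m := le_antisymm him him'
          rcases Nat.lt_or_ge j (i-1) with hj' | hj'
          · exact step m i (h3 j (i-1) hj1 hj' (by omega)) (by cases ε <;> simp) (by cases δ <;> simp)
              (by simp [List.pairwise_cons, rank_pos, rank_neg]; first | (split_ifs <;> omega) | omega) hr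
          · have hje : j = i - 1 := by omega
            exact step m i (h3 1 j le_rfl (by omega) hjlt) (by cases ε <;> simp) (by cases δ <;> simp)
              (by simp [List.pairwise_cons, rank_pos, rank_neg]; first | (split_ifs <;> omega) | omega) hr
      · exact step m i (h3 k j hk1 hkj hjlt) (by cases ε <;> simp) (by cases δ <;> simp)
          (by simp [List.pairwise_cons, rank_pos, rank_neg]; first | (split_ifs <;> omega) | omega) hr
    · exact absurd rfl hki
    · -- j < i < k
      exact step m i (h2 j k hj1 hjlt hkgt hkm) (by cases ε <;> simp) (by cases δ <;> simp)
        (by simp [List.pairwise_cons, rank_pos, rank_neg]; first | (split_ifs <;> omega) | omega) hr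
  · exact absurd rfl hji
  · rcases Nat.lt_trichotomy k i with hklt | rfl | hkgt
    · -- k < i < j
      exact step m i (h2 k j hk1 hklt hjgt hjm) (by cases ε <;> simp) (by cases δ <;> simp)
        (by simp [List.pairwise_cons, rank_pos, rank_neg]; first | (split_ifs <;> omega) | omega) hr
    · exact absurd rfl hki
    · -- both > i
      rcases Nat.lt_trichotomy j k with hjk | rfl | hkj
      · exact step m i (h1 j k hjgt hjk hkm) (by cases ε <;> simp) (by cases δ <;> simp)
          (by simp [List.pairwise_cons, rank_pos, rank_neg]; first | (split_ifs <;> omega) | omega) hr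
      · -- same index, j = k > i
        rcases Nat.lt_or_ge 1 i with hi2 | hi2
        · exact step m i (h2 1 j le_rfl hi2 hjgt hjm) (by cases ε <;> simp) (by cases δ <;> simp)
            (by simp [List.pairwise_cons, rank_pos, rank_neg]; first | (split_ifs <;> omega) | omega) hr
        · have hieq : i = 1 := by omega
          rcases Nat.lt_or_ge j m with hjm' | hjm'
          · exact step m i (h1 j m hjgt hjm' le_rfl) (by cases ε <;> simp) (by cases δ <;> simp)
              (by simp [List.pairwise_cons, rank_pos, rank_neg]; first | (split_ifs <;> omega) | omega) hr
          · have hje : j = m := by omega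
            exact step m i (h1 2 m (by omega) (by omega) le_rfl)
              (by cases ε <;> simp [hje]) (by cases δ <;> simp [hje])
              (by simp [List.pairwise_cons, rank_pos, rank_neg]; first | (split_ifs <;> omega) | omega) hr
      · exact step m i (h1 k j hkgt hkj hjm) (by cases ε <;> simp) (by cases δ <;> simp)
          (by simp [List.pairwise_cons, rank_pos, rank_neg]; first | (split_ifs <;> omega) | omega) hr

end Stmt12Aux

open Stmt12Aux in
/-- Signed symbols `(j, ε)` with `ε = true` for `+` and `ε = false` for `−`.
Fix `m ≥ 3` and `1 ≤ i ≤ m`.  If `w` is a list in which each signed symbol `(j, ε)` with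
`j ∈ {1, …, m} \ {i}` occurs exactly once, and the sublists on the index pairs are as in the
colour-1 case ((i) `[(k,−),(ℓ,−),(ℓ,+),(k,+)]` for `i < k < ℓ ≤ m`, (ii)
`[(j,+),(ℓ,−),(ℓ,+),(j,−)]` for `j < i < ℓ`, (iii) `[(j,+),(k,+),(k,−),(j,−)]` for
`j < k < i`), then `w` is the code `[1⁺:i⁺)(i⁻:m⁻][m⁺:i⁺)(i⁻:1⁻]`. -/
theorem stmt12 (m i : ℕ) (hm : 3 ≤ m) (hi1 : 1 ≤ i) (him : i ≤ m)
    (w : List (ℕ × Bool))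
    (hmem : ∀ x ∈ w, 1 ≤ x.1 ∧ x.1 ≤ m ∧ x.1 ≠ i)
    (hcount : ∀ j : ℕ, 1 ≤ j → j ≤ m → j ≠ i → ∀ ε : Bool, w.count (j, ε) = 1)
    (h1 : ∀ k l : ℕ, i < k → k < l → l ≤ m →
      w.filter (fun x => decide (x.1 = k ∨ x.1 = l)) =
        [(k, false), (l, false), (l, true), (k, true)])
    (h2 : ∀ j l : ℕ, 1 ≤ j → j < i → i < l → l ≤ m →
      w.filter (fun x => decide (x.1 = j ∨ x.1 = l)) =
        [(j, true), (l, false), (l, true), (j, false)])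
    (h3 : ∀ j k : ℕ, 1 ≤ j → j < k → k < i →
      w.filter (fun x => decide (x.1 = j ∨ x.1 = k)) =
        [(j, true), (k, true), (k, false), (j, false)]) :
    w = ((List.range (i - 1)).map fun t => (t + 1, true))
      ++ ((List.range (m - i)).map fun t => (i + 1 + t, false))
      ++ ((List.range (m - i)).map fun t => (m - t, true))
      ++ ((List.range (i - 1)).map fun t => (i - 1 - t, false)) := by
  set T := ((List.range (i - 1)).map fun t => (t + 1, true))
      ++ ((List.range (m - i)).map fun t => (i + 1 + t, false))
      ++ ((List.range (m - i)).map fun t => (m - t, true))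
      ++ ((List.range (i - 1)).map fun t => (i - 1 - t, false)) with hT
  have hcount' : ∀ j : ℕ, 1 ≤ j → j ≤ m → j ≠ i → ∀ ε : Bool,
      @List.count (ℕ × Bool) (@instBEqOfDecidableEq (ℕ × Bool) instDecidableEqProd) (j, ε) w = 1 :=
    fun j a b c ε =>
      (count_congr (@instLawfulBEq (ℕ × Bool) instDecidableEqProd) inferInstance ((j, ε) : ℕ × Bool) w).trans (hcount j a b c ε)
  have hwn : w.Nodup := by
    rw [List.nodup_iff_count_le_one]
    rintro ⟨j, e⟩
    by_cases ha : (j, e) ∈ w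
    · obtain ⟨ha1, ha2, ha3⟩ := hmem (j, e) ha
      have := hcount j ha1 ha2 ha3 e
      omega
    · have h0 : List.count (j, e) w = 0 :=
        List.count_eq_zero.mpr ha
      omega
  have hmemw : ∀ x : ℕ × Bool, 1 ≤ x.1 → x.1 ≤ m → x.1 ≠ i → x ∈ w := by
    rintro ⟨j, e⟩ hx1 hx2 hx3
    have := hcount' j hx1 hx2 hx3 e
    exact (@List.count_pos_iff _ (@instBEqOfDecidableEq (ℕ × Bool) instDecidableEqProd) (@instLawfulBEq _ instDecidableEqProd) _ _).mp (by omega)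
  have hTmem : ∀ x : ℕ × Bool, x ∈ T ↔ (1 ≤ x.1 ∧ x.1 ≤ m ∧ x.1 ≠ i) := by
    rintro ⟨j, ε⟩
    simp only [hT, List.mem_append, List.mem_map, List.mem_range, Prod.mk.injEq]
    constructor
    · rintro (((⟨t, ht, he, hb⟩ | ⟨t, ht, he, hb⟩) | ⟨t, ht, he, hb⟩) | ⟨t, ht, he, hb⟩) <;>
        (subst he; refine ⟨by omega, by omega, by omega⟩)
    · rintro ⟨hj1, hjm, hji⟩
      cases ε with
      | true =>
        rcases Nat.lt_or_ge j i with hj | hj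
        · exact Or.inl (Or.inl (Or.inl ⟨j - 1, by omega, by omega, rfl⟩))
        · exact Or.inl (Or.inr ⟨m - j, by omega, by omega, rfl⟩)
      | false =>
        rcases Nat.lt_or_ge j i with hj | hj
        · exact Or.inr ⟨i - 1 - j, by omega, by omega, rfl⟩
        · exact Or.inl (Or.inl (Or.inr ⟨j - i - 1, by omega, by omega, rfl⟩))
  have hTpair : T.Pairwise (fun a b => rank m i a < rank m i b) := by
    rw [hT]
    simp only [List.pairwise_append, List.pairwise_map, List.mem_append, List.mem_map,
      List.mem_range]
    refine ⟨⟨⟨?_, ?_, ?_⟩, ?_, ?_⟩, ?_, ?_⟩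
    · refine (List.pairwise_lt_range).imp_of_mem ?_
      intro a b ha hb hab
      simp only [List.mem_range] at ha hb
      simp only [Stmt12Aux.rank_pos, Stmt12Aux.rank_neg]
      split_ifs <;> omega
    · refine (List.pairwise_lt_range).imp_of_mem ?_
      intro a b ha hb hab
      simp only [List.mem_range] at ha hb
      simp only [Stmt12Aux.rank_pos, Stmt12Aux.rank_neg]
      split_ifs <;> omega
    · rintro a ⟨t, ht, rfl⟩ b ⟨s, hs, rfl⟩
      simp only [Stmt12Aux.rank_pos, Stmt12Aux.rank_neg]
      split_ifs <;> omega
    · refine (List.pairwise_lt_range).imp_of_mem ?_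
      intro a b ha hb hab
      simp only [List.mem_range] at ha hb
      simp only [Stmt12Aux.rank_pos, Stmt12Aux.rank_neg]
      split_ifs <;> omega
    · rintro a (⟨t, ht, rfl⟩ | ⟨t, ht, rfl⟩) b ⟨s, hs, rfl⟩ <;>
        · simp only [Stmt12Aux.rank_pos, Stmt12Aux.rank_neg]
          split_ifs <;> omega
    · refine (List.pairwise_lt_range).imp_of_mem ?_
      intro a b ha hb hab
      simp only [List.mem_range] at ha hb
      simp only [Stmt12Aux.rank_pos, Stmt12Aux.rank_neg]
      split_ifs <;> omega
    · rintro a ((⟨t, ht, rfl⟩ | ⟨t, ht, rfl⟩) | ⟨t, ht, rfl⟩) b ⟨s, hs, rfl⟩ <;>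
        · simp only [Stmt12Aux.rank_pos, Stmt12Aux.rank_neg]
          split_ifs <;> omega
  have hTnd : T.Nodup := hTpair.imp (by intro a b h he; subst he; omega)
  have hperm : w ~ T := by
    rw [List.perm_ext_iff_of_nodup hwn hTnd]
    intro x
    rw [hTmem]
    constructor
    · exact fun hx => hmem x hx
    · rintro ⟨hx1, hx2, hx3⟩; exact hmemw x hx1 hx2 hx3
  refine eq_of_perm_sublist T w hperm hTnd ?_
  intro a b hab
  have haT : a ∈ T := hab.subset (by simp)
  have hbT : b ∈ T := hab.subset (by simp)
  have hrk : rank m i a < rank m i b := by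
    have := List.Pairwise.sublist hab hTpair
    rw [List.pairwise_cons] at this
    exact this.1 b (by simp)
  exact key m i hm hi1 him w h1 h2 h3 a b ((hTmem a).mp haT) ((hTmem b).mp hbT) hrk
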